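/- There exists a geodesic Ptolemy metric space that is not uniquely geodesic. -/

import Mathlib

def IsPtolemy (X : Type*) [MetricSpace X] : Prop :=
  ∀ x y u v : X, dist x y * dist u v ≤ dist x u * dist y v + dist x v * dist y u

/-- `γ` is a geodesic segment from `x` to `y`, parameterized by arclength on `[0, dist x y]`. -/
def IsGeodesicSegment {X : Type*} [MetricSpace X] (γ : ℝ → X) (x y : X) : Prop :=
  γ 0 = x ∧ γ (dist x y) = y ∧
    ∀ s ∈ Set.Icc (0 : ℝ) (dist x y), ∀ t ∈ Set.Icc (0 : ℝ) (dist x y),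
      dist (γ s) (γ t) = |s - t|

/-- A metric space is geodesic if any two points are joined by a geodesic. -/
def IsGeodesicSpace (X : Type*) [MetricSpace X] : Prop :=
  ∀ x y : X, ∃ γ : ℝ → X, IsGeodesicSegment γ x y

/-- Any two points are joined by exactly one geodesic (up to its values on the
parameter interval). -/
def UniquelyGeodesic (X : Type*) [MetricSpace X] : Prop :=
  ∀ (x y : X) (γ₁ γ₂ : ℝ → X), IsGeodesicSegment γ₁ x y → IsGeodesicSegment γ₂ x y →
    ∀ t ∈ Set.Icc (0 : ℝ) (dist x y), γ₁ t = γ₂ t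
namespace FLS
inductive P : Type
  | pt0 : P
  | pt1 : P
  | seg : P → P → ℝ → P
namespace P
def wt : P → ℕ
  | pt0 => 0
  | pt1 => 0
  | seg p q _ => wt p + wt q + 1
def V : P → Prop
  | pt0 => True
  | pt1 => True
  | seg p q θ => V p ∧ V q ∧ p ≠ q ∧ 0 < θ ∧ θ < 1
open Classical in
noncomputable def D : P → P → ℝ
  | pt0, pt0 => 0
  | pt0, pt1 => 1
  | pt0, seg p q θ => (1-θ) * D pt0 p + θ * D pt0 q
  | pt1, pt0 => 1
  | pt1, pt1 => 0
  | pt1, seg p q θ => (1-θ) * D pt1 p + θ * D pt1 q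
  | seg p q θ, pt0 => (1-θ) * D p pt0 + θ * D q pt0
  | seg p q θ, pt1 => (1-θ) * D p pt1 + θ * D q pt1
  | seg p q θ, seg r s φ =>
      if p = r ∧ q = s then |θ - φ| * D p q
      else if wt (seg r s φ) ≤ wt (seg p q θ)
      then (1-θ) * D p (seg r s φ) + θ * D q (seg r s φ)
      else (1-φ) * D (seg p q θ) r + φ * D (seg p q θ) s
termination_by a b => wt a + wt b
decreasing_by all_goals (simp [wt] <;> omega)

@[simp] lemma wt_pt0 : wt pt0 = 0 := rfl
@[simp] lemma wt_pt1 : wt pt1 = 0 := rfl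
@[simp] lemma wt_seg (p q : P) (θ : ℝ) : wt (seg p q θ) = wt p + wt q + 1 := rfl

lemma wt_eq_zero {a : P} (h : wt a = 0) : a = pt0 ∨ a = pt1 := by
  cases a <;> simp_all [wt]

lemma D_same (p q : P) (x y : ℝ) : D (seg p q x) (seg p q y) = |x - y| * D p q := by
  rw [D]; simp

@[simp] lemma D_self (a : P) : D a a = 0 := by
  cases a with
  | pt0 => simp [D]
  | pt1 => simp [D]
  | seg p q θ => rw [D_same]; simp

/-- Left expansion. -/
lemma D_expL {p q : P} {x : ℝ} {z : P} (hne : ∀ φ : ℝ, z ≠ seg p q φ)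
    (hw : wt z ≤ wt (seg p q x)) :
    D (seg p q x) z = (1-x) * D p z + x * D q z := by
  cases z with
  | pt0 => rw [D]
  | pt1 => rw [D]
  | seg r s φ =>
      rw [D]
      have h1 : ¬(p = r ∧ q = s) := by
        rintro ⟨rfl, rfl⟩; exact hne φ rfl
      rw [if_neg h1, if_pos hw]

/-- For wt-smaller z, distance to a segment expands on the segment side. -/
lemma D_expR {r s : P} {φ : ℝ} {z : P} (hw : wt z < wt (seg r s φ)) :
    D z (seg r s φ) = (1-φ) * D z r + φ * D z s := by
  cases z with
  | pt0 => rw [D]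
  | pt1 => rw [D]
  | seg p q θ =>
      rw [D]
      have h1 : ¬(p = r ∧ q = s) := by
        rintro ⟨rfl, rfl⟩; simp [wt] at hw
      rw [if_neg h1, if_neg (by omega)]

lemma D_symm (a b : P) : D a b = D b a := by
  suffices H : ∀ n a b, wt a + wt b ≤ n → D a b = D b a from
    H (wt a + wt b) a b le_rfl
  intro n
  induction n with
  | zero =>
      intro a b h
      have ha : wt a = 0 := by omega
      have hb : wt b = 0 := by omega
      rcases wt_eq_zero ha with rfl | rfl <;> rcases wt_eq_zero hb with rfl | rfl <;> simp [D]
  | succ n IH =>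
      intro a b h
      cases a with
      | pt0 =>
          cases b with
          | pt0 => rfl
          | pt1 => simp [D]
          | seg p q θ =>
              rw [show D pt0 (seg p q θ) = (1-θ) * D pt0 p + θ * D pt0 q from by rw [D],
                 show D (seg p q θ) pt0 = (1-θ) * D p pt0 + θ * D q pt0 from by rw [D],
                 IH pt0 p (by simp [wt] at h ⊢; omega), IH pt0 q (by simp [wt] at h ⊢; omega)]
      | pt1 =>
          cases b with
          | pt0 => simp [D]
          | pt1 => rfl
          | seg p q θ =>
              rw [show D pt1 (seg p q θ) = (1-θ) * D pt1 p + θ * D pt1 q from by rw [D],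
                 show D (seg p q θ) pt1 = (1-θ) * D p pt1 + θ * D q pt1 from by rw [D],
                 IH pt1 p (by simp [wt] at h ⊢; omega), IH pt1 q (by simp [wt] at h ⊢; omega)]
      | seg p q θ =>
          cases b with
          | pt0 =>
              rw [show D (seg p q θ) pt0 = (1-θ) * D p pt0 + θ * D q pt0 from by rw [D],
                 show D pt0 (seg p q θ) = (1-θ) * D pt0 p + θ * D pt0 q from by rw [D],
                 IH p pt0 (by simp [wt] at h ⊢; omega), IH q pt0 (by simp [wt] at h ⊢; omega)]
          | pt1 =>
              rw [show D (seg p q θ) pt1 = (1-θ) * D p pt1 + θ * D q pt1 from by rw [D],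
                 show D pt1 (seg p q θ) = (1-θ) * D pt1 p + θ * D pt1 q from by rw [D],
                 IH p pt1 (by simp [wt] at h ⊢; omega), IH q pt1 (by simp [wt] at h ⊢; omega)]
          | seg r s φ =>
              by_cases hss : p = r ∧ q = s
              · obtain ⟨rfl, rfl⟩ := hss
                rw [D_same, D_same, abs_sub_comm]
              · have hss' : ¬(r = p ∧ s = q) := fun ⟨h1, h2⟩ => hss ⟨h1.symm, h2.symm⟩
                rcases lt_trichotomy (wt (seg p q θ)) (wt (seg r s φ)) with hlt | heq | hgt
                · -- b bigger : expand b on both sides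
                  rw [D_expR hlt]
                  rw [show D (seg r s φ) (seg p q θ) =
                      (1-φ) * D r (seg p q θ) + φ * D s (seg p q θ) from by
                    rw [D, if_neg hss', if_pos (le_of_lt hlt)]]
                  rw [IH (seg p q θ) r (by simp [wt] at h ⊢; omega),
                      IH (seg p q θ) s (by simp [wt] at h ⊢; omega)]
                · -- equal weights : double expansion
                  have e1 : D (seg p q θ) (seg r s φ) =
                      (1-θ) * D p (seg r s φ) + θ * D q (seg r s φ) := by
                    rw [D, if_neg hss, if_pos (by omega)]
                  have e2 : D (seg r s φ) (seg p q θ) =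
                      (1-φ) * D r (seg p q θ) + φ * D s (seg p q θ) := by
                    rw [D, if_neg hss', if_pos (by omega)]
                  have hp : wt p < wt (seg r s φ) := by simp [wt] at heq ⊢; omega
                  have hq : wt q < wt (seg r s φ) := by simp [wt] at heq ⊢; omega
                  have hr : wt r < wt (seg p q θ) := by simp [wt] at heq ⊢; omega
                  have hs : wt s < wt (seg p q θ) := by simp [wt] at heq ⊢; omega
                  rw [e1, e2, D_expR hp, D_expR hq, D_expR hr, D_expR hs]
                  rw [IH p r (by simp [wt] at h ⊢; omega), IH p s (by simp [wt] at h ⊢; omega),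
                      IH q r (by simp [wt] at h ⊢; omega), IH q s (by simp [wt] at h ⊢; omega)]
                  ring
                · -- a bigger
                  rw [show D (seg p q θ) (seg r s φ) =
                      (1-θ) * D p (seg r s φ) + θ * D q (seg r s φ) from by
                    rw [D, if_neg hss, if_pos (le_of_lt hgt)]]
                  rw [D_expR hgt]
                  rw [IH p (seg r s φ) (by simp [wt] at h ⊢; omega),
                      IH q (seg r s φ) (by simp [wt] at h ⊢; omega)]

lemma V_seg {p q : P} {θ : ℝ} (h : V (seg p q θ)) :
    V p ∧ V q ∧ p ≠ q ∧ 0 < θ ∧ θ < 1 := h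

lemma D_nonneg : ∀ (a b : P), V a → V b → 0 ≤ D a b := by
  suffices H : ∀ n a b, V a → V b → wt a + wt b ≤ n → 0 ≤ D a b from
    fun a b ha hb => H (wt a + wt b) a b ha hb le_rfl
  intro n
  induction n with
  | zero =>
      intro a b _ _ h
      rcases wt_eq_zero (by omega : wt a = 0) with rfl | rfl <;>
        rcases wt_eq_zero (by omega : wt b = 0) with rfl | rfl <;> simp [D]
  | succ n IH =>
      intro a b ha hb h
      cases a with
      | pt0 =>
          cases b with
          | pt0 => simp
          | pt1 => simp [D]
          | seg p q θ =>
              obtain ⟨hp, hq, -, h0, h1⟩ := V_seg hb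
              rw [show D pt0 (seg p q θ) = (1-θ) * D pt0 p + θ * D pt0 q from by rw [D]]
              have := IH pt0 p ha hp (by simp [wt] at h ⊢; omega)
              have := IH pt0 q ha hq (by simp [wt] at h ⊢; omega)
              nlinarith
      | pt1 =>
          cases b with
          | pt0 => simp [D]
          | pt1 => simp
          | seg p q θ =>
              obtain ⟨hp, hq, -, h0, h1⟩ := V_seg hb
              rw [show D pt1 (seg p q θ) = (1-θ) * D pt1 p + θ * D pt1 q from by rw [D]]
              have := IH pt1 p ha hp (by simp [wt] at h ⊢; omega)
              have := IH pt1 q ha hq (by simp [wt] at h ⊢; omega)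
              nlinarith
      | seg p q θ =>
          obtain ⟨hp, hq, -, h0, h1⟩ := V_seg ha
          cases b with
          | pt0 =>
              rw [show D (seg p q θ) pt0 = (1-θ) * D p pt0 + θ * D q pt0 from by rw [D]]
              have := IH p pt0 hp hb (by simp [wt] at h ⊢; omega)
              have := IH q pt0 hq hb (by simp [wt] at h ⊢; omega)
              nlinarith
          | pt1 =>
              rw [show D (seg p q θ) pt1 = (1-θ) * D p pt1 + θ * D q pt1 from by rw [D]]
              have := IH p pt1 hp hb (by simp [wt] at h ⊢; omega)
              have := IH q pt1 hq hb (by simp [wt] at h ⊢; omega)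
              nlinarith
          | seg r s φ =>
              obtain ⟨hr, hs, -, h0', h1'⟩ := V_seg hb
              by_cases hss : p = r ∧ q = s
              · obtain ⟨rfl, rfl⟩ := hss
                rw [D_same]
                have := IH p q hp hq (by simp [wt] at h ⊢; omega)
                positivity
              · rcases le_or_gt (wt (seg r s φ)) (wt (seg p q θ)) with hw | hw
                · rw [D, if_neg hss, if_pos hw]
                  have := IH p (seg r s φ) hp hb (by simp [wt] at h ⊢; omega)
                  have := IH q (seg r s φ) hq hb (by simp [wt] at h ⊢; omega)
                  nlinarith
                · rw [D, if_neg hss, if_neg (by omega)]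
                  have := IH (seg p q θ) r ha hr (by simp [wt] at h ⊢; omega)
                  have := IH (seg p q θ) s ha hs (by simp [wt] at h ⊢; omega)
                  nlinarith


-- ### Algebra helpers for the triangle inequality

private lemma T3alg {x y Dpq u v : ℝ} (h1 : u ≤ Dpq + v) (h2 : v ≤ Dpq + u) :
    (1-x)*u + x*v ≤ |x - y| * Dpq + ((1-y)*u + y*v) := by
  rcases le_total x y with hxy | hxy
  · rw [abs_of_nonpos (by linarith)]; nlinarith
  · rw [abs_of_nonneg (by linarith)]; nlinarith

private lemma T4alg {x z Dpq u v : ℝ} (hx0 : 0 ≤ x) (hx1 : x ≤ 1) (hz0 : 0 ≤ z)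
    (hz1 : z ≤ 1) (hu : 0 ≤ u) (hv : 0 ≤ v) (hD : Dpq ≤ u + v) :
    |x - z| * Dpq ≤ ((1-x)*u + x*v) + ((1-z)*u + z*v) := by
  have hDnn : 0 ≤ Dpq ∨ Dpq ≤ 0 := le_total 0 Dpq
  rcases le_total x z with hxz | hxz
  · rw [abs_of_nonpos (by linarith)]
    rcases hDnn with h | h
    · nlinarith
    · nlinarith
  · rw [abs_of_nonneg (by linarith)]
    rcases hDnn with h | h
    · nlinarith
    · nlinarith

-- ### The triangle inequality

lemma D_triangle : ∀ (a b c : P), V a → V b → V c → D a c ≤ D a b + D b c := by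
  suffices H : ∀ n a b c, V a → V b → V c → wt a + wt b + wt c ≤ n →
      D a c ≤ D a b + D b c from
    fun a b c ha hb hc => H _ a b c ha hb hc le_rfl
  intro n
  induction n with
  | zero =>
      intro a b c _ _ _ h
      rcases wt_eq_zero (by omega : wt a = 0) with rfl | rfl <;>
        rcases wt_eq_zero (by omega : wt b = 0) with rfl | rfl <;>
          rcases wt_eq_zero (by omega : wt c = 0) with rfl | rfl <;>
            simp [D] <;> norm_num
  | succ n IH =>
      intro a b c ha hb hc h
      -- helper: dominant middle point
      have MID : ∀ (a c : P) (p q : P) (y : ℝ), V a → V (seg p q y) → V c →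
          wt a + wt (seg p q y) + wt c ≤ n + 1 →
          wt a ≤ wt (seg p q y) → wt c ≤ wt (seg p q y) →
          (∀ φ : ℝ, a ≠ seg p q φ) → (∀ φ : ℝ, c ≠ seg p q φ) →
          D a c ≤ D a (seg p q y) + D (seg p q y) c := by
        intro a c p q y ha hb hc h hwa hwc hna hnc
        obtain ⟨hp, hq, -, hy0, hy1⟩ := V_seg hb
        rw [D_symm a (seg p q y), D_expL hna hwa, D_expL hnc hwc]
        have IH1 : D a c ≤ D p a + D p c := by
          have := IH a p c ha hp hc (by simp [wt] at h ⊢; omega)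
          rwa [D_symm a p] at this
        have IH2 : D a c ≤ D q a + D q c := by
          have := IH a q c ha hq hc (by simp [wt] at h ⊢; omega)
          rwa [D_symm a q] at this
        have e1 := mul_le_mul_of_nonneg_left IH1 (by linarith : (0:ℝ) ≤ 1 - y)
        have e2 := mul_le_mul_of_nonneg_left IH2 (le_of_lt hy0)
        linarith [e1, e2]
      -- helper: dominant endpoint (first position)
      have ENDP : ∀ (b c : P) (p q : P) (x : ℝ), V (seg p q x) → V b → V c →
          wt (seg p q x) + wt b + wt c ≤ n + 1 →
          wt b ≤ wt (seg p q x) → wt c ≤ wt (seg p q x) →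
          (∀ φ : ℝ, b ≠ seg p q φ) → (∀ φ : ℝ, c ≠ seg p q φ) →
          D (seg p q x) c ≤ D (seg p q x) b + D b c := by
        intro b c p q x ha hb hc h hwb hwc hnb hnc
        obtain ⟨hp, hq, -, hx0, hx1⟩ := V_seg ha
        rw [D_expL hnc hwc, D_expL hnb hwb]
        have IH1 : D p c ≤ D p b + D b c := IH p b c hp hb hc (by simp [wt] at h ⊢; omega)
        have IH2 : D q c ≤ D q b + D b c := IH q b c hq hb hc (by simp [wt] at h ⊢; omega)
        have e1 := mul_le_mul_of_nonneg_left IH1 (by linarith : (0:ℝ) ≤ 1 - x)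
        have e2 := mul_le_mul_of_nonneg_left IH2 (le_of_lt hx0)
        linarith [e1, e2]
      -- helper : same-seg pair in (a,b) position, c off-segment
      have PAIRAB : ∀ (p q : P) (x y : ℝ) (c : P), V (seg p q x) → V (seg p q y) → V c →
          wt (seg p q x) + wt (seg p q y) + wt c ≤ n + 1 →
          wt c ≤ wt (seg p q x) → (∀ φ : ℝ, c ≠ seg p q φ) →
          D (seg p q x) c ≤ D (seg p q x) (seg p q y) + D (seg p q y) c := by
        intro p q x y c ha hb hc h hwc hnc
        obtain ⟨hp, hq, -, hx0, hx1⟩ := V_seg ha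
        obtain ⟨-, -, -, hy0, hy1⟩ := V_seg hb
        rw [D_same, D_expL hnc hwc, D_expL hnc (by simp [wt] at hwc ⊢; omega)]
        have IH1 : D p c ≤ D p q + D q c := IH p q c hp hq hc (by simp [wt] at h ⊢; omega)
        have IH2 : D q c ≤ D p q + D p c := by
          have := IH q p c hq hp hc (by simp [wt] at h ⊢; omega)
          rw [D_symm q p] at this; linarith
        exact T3alg IH1 IH2
      -- helper : same-seg pair in (a,c) position, b off
      have PAIRAC : ∀ (p q : P) (x z : ℝ) (b : P), V (seg p q x) → V b → V (seg p q z) →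
          wt (seg p q x) + wt b + wt (seg p q z) ≤ n + 1 →
          wt b ≤ wt (seg p q x) → (∀ φ : ℝ, b ≠ seg p q φ) →
          D (seg p q x) (seg p q z) ≤ D (seg p q x) b + D b (seg p q z) := by
        intro p q x z b ha hb hc h hwb hnb
        obtain ⟨hp, hq, -, hx0, hx1⟩ := V_seg ha
        obtain ⟨-, -, -, hz0, hz1⟩ := V_seg hc
        rw [D_same, D_expL hnb hwb, D_symm b (seg p q z),
            D_expL hnb (by simp [wt] at hwb ⊢; omega)]
        have IH1 : D p q ≤ D p b + D q b := by
          have := IH p b q hp hb hq (by simp [wt] at h ⊢; omega)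
          rw [D_symm b q] at this; linarith
        exact T4alg (le_of_lt hx0) (le_of_lt hx1) (le_of_lt hz0) (le_of_lt hz1)
          (D_nonneg p b hp hb) (D_nonneg q b hq hb) IH1
      -- main case analysis : find dominant point
      rcases le_total (wt a) (wt b) with h1 | h1
      · rcases le_total (wt c) (wt b) with h2 | h2
        · -- b dominant
          cases hbe : b with
          | pt0 =>
              subst hbe
              rcases wt_eq_zero (by simp [wt] at h1; omega : wt a = 0) with rfl | rfl <;>
                rcases wt_eq_zero (by simp [wt] at h2; omega : wt c = 0) with rfl | rfl <;>
                  simp [D] <;> norm_num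
          | pt1 =>
              subst hbe
              rcases wt_eq_zero (by simp [wt] at h1; omega : wt a = 0) with rfl | rfl <;>
                rcases wt_eq_zero (by simp [wt] at h2; omega : wt c = 0) with rfl | rfl <;>
                  simp [D] <;> norm_num
          | seg p q y =>
              subst hbe
              by_cases hoa : ∃ φ : ℝ, a = seg p q φ
              · obtain ⟨x, rfl⟩ := hoa
                by_cases hoc : ∃ φ : ℝ, c = seg p q φ
                · obtain ⟨z, rfl⟩ := hoc
                  -- all three on one segment
                  obtain ⟨hp, hq, -, -, -⟩ := V_seg ha
                  rw [D_same, D_same, D_same]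
                  have habs := abs_sub_le x y z
                  have hDnn := D_nonneg p q hp hq
                  nlinarith
                · push_neg at hoc
                  exact PAIRAB p q x y c ha hb hc h (by simp [wt] at h2 ⊢; omega) hoc
              · push_neg at hoa
                by_cases hoc : ∃ φ : ℝ, c = seg p q φ
                · obtain ⟨z, rfl⟩ := hoc
                  -- pair (b,c); use PAIRAB mirrored
                  have key := PAIRAB p q z y a hc hb ha (by omega)
                    (by simp [wt] at h1 ⊢; omega) hoa
                  rw [D_symm a (seg p q y), D_symm a (seg p q z),
                      D_symm (seg p q y) (seg p q z)]
                  linarith [key]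
                · push_neg at hoc
                  exact MID a c p q y ha hb hc h h1 h2 hoa hoc
        · -- wt b ≤ wt c ; compare a c
          rcases le_total (wt a) (wt c) with h3 | h3
          · -- c dominant
            cases hce : c with
            | pt0 =>
                subst hce
                rcases wt_eq_zero (by simp [wt] at h3; omega : wt a = 0) with rfl | rfl <;>
                  rcases wt_eq_zero (by simp [wt] at h2; omega : wt b = 0) with rfl | rfl <;>
                    simp [D] <;> norm_num
            | pt1 =>
                subst hce
                rcases wt_eq_zero (by simp [wt] at h3; omega : wt a = 0) with rfl | rfl <;>
                  rcases wt_eq_zero (by simp [wt] at h2; omega : wt b = 0) with rfl | rfl <;>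
                    simp [D] <;> norm_num
            | seg p q z =>
                subst hce
                by_cases hob : ∃ φ : ℝ, b = seg p q φ
                · obtain ⟨y, rfl⟩ := hob
                  by_cases hoa : ∃ φ : ℝ, a = seg p q φ
                  · obtain ⟨x, rfl⟩ := hoa
                    obtain ⟨hp, hq, -, -, -⟩ := V_seg ha
                    rw [D_same, D_same, D_same]
                    have habs := abs_sub_le x y z
                    have hDnn := D_nonneg p q hp hq
                    nlinarith
                  · push_neg at hoa
                    -- pair (b,c), a off : mirrored PAIRAB
                    have key := PAIRAB p q z y a hc hb ha (by omega)
                      (by simp [wt] at h3 ⊢; omega) hoa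
                    rw [D_symm a (seg p q y), D_symm a (seg p q z),
                        D_symm (seg p q y) (seg p q z)]
                    linarith [key]
                · push_neg at hob
                  by_cases hoa : ∃ φ : ℝ, a = seg p q φ
                  · obtain ⟨x, rfl⟩ := hoa
                    exact PAIRAC p q x z b ha hb hc h (by simp [wt] at h2 ⊢; omega) hob
                  · push_neg at hoa
                    -- c dominant endpoint : mirror of ENDP
                    have key := ENDP b a p q z hc hb ha (by omega) h2 h3 hob hoa
                    rw [D_symm a b, D_symm a (seg p q z), D_symm b (seg p q z)]
                    linarith [key]
          · -- a dominant (wt b ≤ wt c ≤ wt a)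
            cases hae : a with
            | pt0 =>
                subst hae
                rcases wt_eq_zero (by simp [wt] at h3; omega : wt c = 0) with rfl | rfl <;>
                  rcases wt_eq_zero (by simp [wt] at h2; omega : wt b = 0) with rfl | rfl <;>
                    simp [D] <;> norm_num
            | pt1 =>
                subst hae
                rcases wt_eq_zero (by simp [wt] at h3; omega : wt c = 0) with rfl | rfl <;>
                  rcases wt_eq_zero (by simp [wt] at h2; omega : wt b = 0) with rfl | rfl <;>
                    simp [D] <;> norm_num
            | seg p q x =>
                subst hae
                by_cases hob : ∃ φ : ℝ, b = seg p q φ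
                · obtain ⟨y, rfl⟩ := hob
                  by_cases hoc : ∃ φ : ℝ, c = seg p q φ
                  · obtain ⟨z, rfl⟩ := hoc
                    obtain ⟨hp, hq, -, -, -⟩ := V_seg ha
                    rw [D_same, D_same, D_same]
                    have habs := abs_sub_le x y z
                    have hDnn := D_nonneg p q hp hq
                    nlinarith
                  · push_neg at hoc
                    exact PAIRAB p q x y c ha hb hc h h3 hoc
                · push_neg at hob
                  by_cases hoc : ∃ φ : ℝ, c = seg p q φ
                  · obtain ⟨z, rfl⟩ := hoc
                    exact PAIRAC p q x z b ha hb hc h (by simp [wt] at h2 ⊢; omega) hob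
                  · push_neg at hoc
                    exact ENDP b c p q x ha hb hc h (by simp [wt] at h2 h3 ⊢; omega) h3 hob hoc
      · -- wt b ≤ wt a
        rcases le_total (wt c) (wt a) with h2 | h2
        · -- a dominant
          cases hae : a with
          | pt0 =>
              subst hae
              rcases wt_eq_zero (by simp [wt] at h2; omega : wt c = 0) with rfl | rfl <;>
                rcases wt_eq_zero (by simp [wt] at h1; omega : wt b = 0) with rfl | rfl <;>
                  simp [D] <;> norm_num
          | pt1 =>
              subst hae
              rcases wt_eq_zero (by simp [wt] at h2; omega : wt c = 0) with rfl | rfl <;>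
                rcases wt_eq_zero (by simp [wt] at h1; omega : wt b = 0) with rfl | rfl <;>
                  simp [D] <;> norm_num
          | seg p q x =>
              subst hae
              by_cases hob : ∃ φ : ℝ, b = seg p q φ
              · obtain ⟨y, rfl⟩ := hob
                by_cases hoc : ∃ φ : ℝ, c = seg p q φ
                · obtain ⟨z, rfl⟩ := hoc
                  obtain ⟨hp, hq, -, -, -⟩ := V_seg ha
                  rw [D_same, D_same, D_same]
                  have habs := abs_sub_le x y z
                  have hDnn := D_nonneg p q hp hq
                  nlinarith
                · push_neg at hoc
                  exact PAIRAB p q x y c ha hb hc h (by simp [wt] at h2 ⊢; omega) hoc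
              · push_neg at hob
                by_cases hoc : ∃ φ : ℝ, c = seg p q φ
                · obtain ⟨z, rfl⟩ := hoc
                  exact PAIRAC p q x z b ha hb hc h h1 hob
                · push_neg at hoc
                  exact ENDP b c p q x ha hb hc h h1 h2 hob hoc
        · -- c dominant (wt a ≤ wt c)
          cases hce : c with
          | pt0 =>
              subst hce
              rcases wt_eq_zero (by simp [wt] at h2; omega : wt a = 0) with rfl | rfl <;>
                rcases wt_eq_zero (by simp [wt] at h1; omega : wt b = 0) with rfl | rfl <;>
                  simp [D] <;> norm_num
          | pt1 =>
              subst hce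
              rcases wt_eq_zero (by simp [wt] at h2; omega : wt a = 0) with rfl | rfl <;>
                rcases wt_eq_zero (by simp [wt] at h1; omega : wt b = 0) with rfl | rfl <;>
                  simp [D] <;> norm_num
          | seg p q z =>
              subst hce
              by_cases hob : ∃ φ : ℝ, b = seg p q φ
              · obtain ⟨y, rfl⟩ := hob
                by_cases hoa : ∃ φ : ℝ, a = seg p q φ
                · obtain ⟨x, rfl⟩ := hoa
                  obtain ⟨hp, hq, -, -, -⟩ := V_seg ha
                  rw [D_same, D_same, D_same]
                  have habs := abs_sub_le x y z
                  have hDnn := D_nonneg p q hp hq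
                  nlinarith
                · push_neg at hoa
                  have key := PAIRAB p q z y a hc hb ha (by omega) h2 hoa
                  rw [D_symm a (seg p q y), D_symm a (seg p q z),
                      D_symm (seg p q y) (seg p q z)]
                  linarith [key]
              · push_neg at hob
                by_cases hoa : ∃ φ : ℝ, a = seg p q φ
                · obtain ⟨x, rfl⟩ := hoa
                  exact PAIRAC p q x z b ha hb hc h
                    (by simp [wt] at h1 h2 ⊢; omega) hob
                · push_neg at hoa
                  have key := ENDP b a p q z hc hb ha (by omega)
                    (by simp [wt] at h1 h2 ⊢; omega) h2 hob hoa
                  rw [D_symm a b, D_symm a (seg p q z), D_symm b (seg p q z)]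
                  linarith [key]


-- ### Positivity

lemma D_pos : ∀ (a b : P), V a → V b → a ≠ b → 0 < D a b := by
  suffices H : ∀ n a b, V a → V b → a ≠ b → wt a + wt b ≤ n → 0 < D a b from
    fun a b ha hb hne => H _ a b ha hb hne le_rfl
  intro n
  induction n with
  | zero =>
      intro a b _ _ hne h
      rcases wt_eq_zero (by omega : wt a = 0) with rfl | rfl <;>
        rcases wt_eq_zero (by omega : wt b = 0) with rfl | rfl <;>
          simp_all [D] <;> norm_num
  | succ n IH =>
      intro a b ha hb hne h
      have AUX : ∀ (p q : P) (x : ℝ) (b : P), V (seg p q x) → V b →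
          wt (seg p q x) + wt b ≤ n + 1 → wt b ≤ wt (seg p q x) → seg p q x ≠ b →
          0 < D (seg p q x) b := by
        intro p q x b ha hb h hw hne
        obtain ⟨hp, hq, hpq, hx0, hx1⟩ := V_seg ha
        by_cases hob : ∃ φ : ℝ, b = seg p q φ
        · obtain ⟨y, rfl⟩ := hob
          rw [D_same]
          have hxy : x ≠ y := fun hh => hne (by rw [hh])
          have hDpq : 0 < D p q := IH p q hp hq hpq (by simp [wt] at h ⊢; omega)
          exact mul_pos (abs_pos.mpr (sub_ne_zero.mpr hxy)) hDpq
        · push_neg at hob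
          rw [D_expL hob hw]
          by_cases hbp : b = p
          · subst hbp
            rw [D_self]
            have : 0 < D q b := by
              have := IH q b hq hb (fun hh => hpq hh.symm) (by simp [wt] at h ⊢; omega)
              exact this
            nlinarith
          · have h1 : 0 < D p b := by
              have := IH p b hp hb (fun hh => hbp hh.symm) (by simp [wt] at h ⊢; omega)
              exact this
            have h2 : 0 ≤ D q b := D_nonneg q b hq hb
            nlinarith
      rcases le_total (wt b) (wt a) with hw | hw
      · cases a with
        | pt0 =>
            rcases wt_eq_zero (by simp [wt] at hw; omega : wt b = 0) with rfl | rfl <;>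
              simp_all [D] <;> norm_num
        | pt1 =>
            rcases wt_eq_zero (by simp [wt] at hw; omega : wt b = 0) with rfl | rfl <;>
              simp_all [D] <;> norm_num
        | seg p q x => exact AUX p q x b ha hb h hw hne
      · cases b with
        | pt0 =>
            rcases wt_eq_zero (by simp [wt] at hw; omega : wt a = 0) with rfl | rfl <;>
              simp_all [D] <;> norm_num
        | pt1 =>
            rcases wt_eq_zero (by simp [wt] at hw; omega : wt a = 0) with rfl | rfl <;>
              simp_all [D] <;> norm_num
        | seg p q x =>
            rw [D_symm]
            exact AUX p q x a hb ha (by omega) hw (fun hh => hne hh.symm)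


-- ### Algebra helpers for the Ptolemy inequality

private lemma abs_ptolemy (x y z w : ℝ) :
    |x - y| * |z - w| ≤ |x - z| * |y - w| + |x - w| * |y - z| := by
  calc |x - y| * |z - w| = |(x - y) * (z - w)| := (abs_mul _ _).symm
    _ = |(x - z) * (y - w) - (x - w) * (y - z)| := by ring_nf
    _ ≤ |(x - z) * (y - w)| + |(x - w) * (y - z)| := by
        have h := abs_add_le ((x - z) * (y - w)) (-((x - w) * (y - z)))
        simpa [sub_eq_add_neg] using h
    _ = |x - z| * |y - w| + |x - w| * |y - z| := by rw [abs_mul, abs_mul]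

private lemma PBalg {x y z f0 f1 : ℝ} (hf0 : 0 ≤ f0) (hf1 : 0 ≤ f1)
    (hx0 : 0 ≤ x) (hx1 : x ≤ 1) (hy0 : 0 ≤ y) (hy1 : y ≤ 1) (hz0 : 0 ≤ z) (hz1 : z ≤ 1) :
    |x - y| * ((1-z)*f0 + z*f1) ≤
      |x - z| * ((1-y)*f0 + y*f1) + |y - z| * ((1-x)*f0 + x*f1) := by
  have hfx : 0 ≤ (1-x)*f0 + x*f1 := by nlinarith
  have hfy : 0 ≤ (1-y)*f0 + y*f1 := by nlinarith
  have hfz : 0 ≤ (1-z)*f0 + z*f1 := by nlinarith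
  have hid : (x - y) * ((1-z)*f0 + z*f1) + (y - z) * ((1-x)*f0 + x*f1)
      + (z - x) * ((1-y)*f0 + y*f1) = 0 := by ring
  rcases le_total x y with h1 | h1 <;> rcases le_total y z with h2 | h2 <;>
    rcases le_total x z with h3 | h3
  · rw [abs_of_nonpos (by linarith), abs_of_nonpos (by linarith),
      abs_of_nonpos (by linarith)]
    nlinarith [hid, mul_nonneg (sub_nonneg.2 h2) hfx]
  · rw [abs_of_nonpos (by linarith), abs_of_nonneg (by linarith),
      abs_of_nonpos (by linarith)]
    nlinarith [hid, mul_nonneg (sub_nonneg.2 h2) hfx, mul_nonneg (sub_nonneg.2 h3) hfy]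
  · rw [abs_of_nonpos (by linarith), abs_of_nonpos (by linarith),
      abs_of_nonneg (by linarith)]
    nlinarith [hid]
  · rw [abs_of_nonpos (by linarith), abs_of_nonneg (by linarith),
      abs_of_nonneg (by linarith)]
    nlinarith [hid, mul_nonneg (sub_nonneg.2 h3) hfy]
  · rw [abs_of_nonneg (by linarith), abs_of_nonpos (by linarith),
      abs_of_nonpos (by linarith)]
    nlinarith [hid, mul_nonneg (sub_nonneg.2 h3) hfy]
  · rw [abs_of_nonneg (by linarith), abs_of_nonneg (by linarith),
      abs_of_nonpos (by linarith)]
    nlinarith [hid]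
  · rw [abs_of_nonneg (by linarith), abs_of_nonpos (by linarith),
      abs_of_nonneg (by linarith)]
    nlinarith [hid, mul_nonneg (sub_nonneg.2 h3) hfy, mul_nonneg (sub_nonneg.2 h2) hfx]
  · rw [abs_of_nonneg (by linarith), abs_of_nonneg (by linarith),
      abs_of_nonneg (by linarith)]
    nlinarith [hid, mul_nonneg (sub_nonneg.2 h2) hfx]

private lemma PCalg {x y a0 a1 b0 b1 L : ℝ}
    (ha0 : 0 ≤ a0) (ha1 : 0 ≤ a1) (hb0 : 0 ≤ b0) (hb1 : 0 ≤ b1)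
    (hx0 : 0 ≤ x) (hx1 : x ≤ 1) (hy0 : 0 ≤ y) (hy1 : y ≤ 1)
    (hIH : L ≤ a0*b1 + a1*b0) :
    |x - y| * L ≤ ((1-x)*a0 + x*a1) * ((1-y)*b0 + y*b1)
      + ((1-x)*b0 + x*b1) * ((1-y)*a0 + y*a1) := by
  rcases le_total x y with h | h
  · rw [abs_of_nonpos (by linarith)]
    nlinarith [mul_nonneg (mul_nonneg (by linarith : (0:ℝ) ≤ 1-x) (by linarith : (0:ℝ) ≤ 1-y)) (mul_nonneg ha0 hb0),
      mul_nonneg (mul_nonneg hx0 hy0) (mul_nonneg ha1 hb1),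
      mul_nonneg (mul_nonneg hx0 (by linarith : (0:ℝ) ≤ 1-y)) (add_nonneg (mul_nonneg ha0 hb1) (mul_nonneg ha1 hb0)),
      mul_nonneg (sub_nonneg.2 h) (sub_nonneg.2 hIH)]
  · rw [abs_of_nonneg (by linarith)]
    nlinarith [mul_nonneg (mul_nonneg (by linarith : (0:ℝ) ≤ 1-x) (by linarith : (0:ℝ) ≤ 1-y)) (mul_nonneg ha0 hb0),
      mul_nonneg (mul_nonneg hx0 hy0) (mul_nonneg ha1 hb1),
      mul_nonneg (mul_nonneg hy0 (by linarith : (0:ℝ) ≤ 1-x)) (add_nonneg (mul_nonneg ha0 hb1) (mul_nonneg ha1 hb0)),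
      mul_nonneg (sub_nonneg.2 h) (sub_nonneg.2 hIH)]

private lemma PDalg {x z a0 a1 u0 u1 L : ℝ}
    (h1 : a0*u1 ≤ L + a1*u0) (h2 : a1*u0 ≤ L + a0*u1) :
    ((1-x)*a0 + x*a1) * ((1-z)*u0 + z*u1) ≤
      |x - z| * L + ((1-x)*u0 + x*u1) * ((1-z)*a0 + z*a1) := by
  have hid : ((1-x)*a0 + x*a1) * ((1-z)*u0 + z*u1)
      - ((1-x)*u0 + x*u1) * ((1-z)*a0 + z*a1) = (z - x) * (a0*u1 - a1*u0) := by ring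
  rcases le_total x z with h | h
  · rw [abs_of_nonpos (by linarith)]
    nlinarith [mul_le_mul_of_nonneg_left (by linarith : a0*u1 - a1*u0 ≤ L)
      (sub_nonneg.2 h)]
  · rw [abs_of_nonneg (by linarith)]
    nlinarith [mul_le_mul_of_nonneg_left (by linarith : a1*u0 - a0*u1 ≤ L)
      (sub_nonneg.2 h)]

-- ### permutation lemmas

private lemma G_ab {a b u v : P} (h : D b a * D u v ≤ D b u * D a v + D b v * D a u) :
    D a b * D u v ≤ D a u * D b v + D a v * D b u := by
  rw [D_symm a b]; linarith [h]

private lemma G_uv {a b u v : P} (h : D a b * D v u ≤ D a v * D b u + D a u * D b v) :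
    D a b * D u v ≤ D a u * D b v + D a v * D b u := by
  rw [show D u v = D v u from D_symm u v]; linarith [h]

private lemma G_blocks {a b u v : P} (h : D u v * D a b ≤ D u a * D v b + D u b * D v a) :
    D a b * D u v ≤ D a u * D b v + D a v * D b u := by
  rw [show D a u = D u a from D_symm a u, show D b v = D v b from D_symm b v,
    show D a v = D v a from D_symm a v, show D b u = D u b from D_symm b u]
  linarith [h]

-- ### The Ptolemy inequality

lemma D_ptolemy : ∀ (a b u v : P), V a → V b → V u → V v →
    D a b * D u v ≤ D a u * D b v + D a v * D b u := by
  suffices H : ∀ n a b u v, V a → V b → V u → V v →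
      wt a + wt b + wt u + wt v ≤ n →
      D a b * D u v ≤ D a u * D b v + D a v * D b u from
    fun a b u v ha hb hu hv => H _ a b u v ha hb hu hv le_rfl
  intro n
  induction n with
  | zero =>
      intro a b u v _ _ _ _ h
      rcases wt_eq_zero (by omega : wt a = 0) with rfl | rfl <;>
        rcases wt_eq_zero (by omega : wt b = 0) with rfl | rfl <;>
          rcases wt_eq_zero (by omega : wt u = 0) with rfl | rfl <;>
            rcases wt_eq_zero (by omega : wt v = 0) with rfl | rfl <;>
              simp [D] <;> norm_num
  | succ n IH =>
      intro a b u v ha hb hu hv h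
      have DOM : ∀ (p q : P) (x : ℝ) (b u v : P), V (seg p q x) → V b → V u → V v →
          wt (seg p q x) + wt b + wt u + wt v ≤ n + 1 →
          wt b ≤ wt (seg p q x) → wt u ≤ wt (seg p q x) → wt v ≤ wt (seg p q x) →
          D (seg p q x) b * D u v ≤ D (seg p q x) u * D b v + D (seg p q x) v * D b u := by
        intro p q x b u v ha hb hu hv h hwb hwu hwv
        obtain ⟨hp, hq, hpq, hx0, hx1⟩ := V_seg ha
        by_cases hob : ∃ φ : ℝ, b = seg p q φ
        · obtain ⟨y, rfl⟩ := hob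
          obtain ⟨-, -, -, hy0, hy1⟩ := V_seg hb
          by_cases hou : ∃ φ : ℝ, u = seg p q φ
          · obtain ⟨z, rfl⟩ := hou
            obtain ⟨-, -, -, hz0, hz1⟩ := V_seg hu
            by_cases hov : ∃ φ : ℝ, v = seg p q φ
            · -- all four on the segment
              obtain ⟨w, rfl⟩ := hov
              rw [D_same, D_same, D_same, D_same, D_same, D_same]
              have e := mul_le_mul_of_nonneg_right (abs_ptolemy x y z w)
                (mul_nonneg (D_nonneg p q hp hq) (D_nonneg p q hp hq))
              linarith [e]
            · -- a b u on the segment, v off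
              push_neg at hov
              rw [D_same, D_same, D_same,
                D_expL (x := x) hov hwv,
                D_expL (x := y) hov (by simp [wt] at hwv ⊢; omega),
                D_expL (x := z) hov (by simp [wt] at hwv ⊢; omega)]
              have hPB := PBalg (D_nonneg p v hp hv) (D_nonneg q v hq hv)
                (le_of_lt hx0) (le_of_lt hx1) (le_of_lt hy0) (le_of_lt hy1)
                (le_of_lt hz0) (le_of_lt hz1)
              have e := mul_le_mul_of_nonneg_left hPB (D_nonneg p q hp hq)
              linarith [e]
          · push_neg at hou
            by_cases hov : ∃ φ : ℝ, v = seg p q φ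
            · -- a b v on the segment, u off : swap u v
              obtain ⟨w, rfl⟩ := hov
              obtain ⟨-, -, -, hw0, hw1⟩ := V_seg hv
              apply G_uv
              rw [D_same, D_same, D_same,
                D_expL (x := x) hou hwu,
                D_expL (x := y) hou (by simp [wt] at hwu ⊢; omega),
                D_expL (x := w) hou (by simp [wt] at hwu ⊢; omega)]
              have hPB := PBalg (D_nonneg p u hp hu) (D_nonneg q u hq hu)
                (le_of_lt hx0) (le_of_lt hx1) (le_of_lt hy0) (le_of_lt hy1)
                (le_of_lt hw0) (le_of_lt hw1)
              have e := mul_le_mul_of_nonneg_left hPB (D_nonneg p q hp hq)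
              linarith [e]
            · -- pair (a,b) on the segment, u v off
              push_neg at hov
              rw [D_same, D_expL (x := x) hou hwu, D_expL (x := x) hov hwv,
                D_expL (x := y) hov (by simp [wt] at hwv ⊢; omega),
                D_expL (x := y) hou (by simp [wt] at hwu ⊢; omega)]
              have hIH : D p q * D u v ≤ D p u * D q v + D p v * D q u :=
                IH p q u v hp hq hu hv (by simp [wt] at h ⊢; omega)
              have key := PCalg (D_nonneg p u hp hu) (D_nonneg q u hq hu)
                (D_nonneg p v hp hv) (D_nonneg q v hq hv)
                (le_of_lt hx0) (le_of_lt hx1) (le_of_lt hy0) (le_of_lt hy1)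
                (by linarith [hIH] : D p q * D u v ≤ D p u * D q v + D q u * D p v)
              linarith [key]
        · push_neg at hob
          by_cases hou : ∃ φ : ℝ, u = seg p q φ
          · obtain ⟨z, rfl⟩ := hou
            obtain ⟨-, -, -, hz0, hz1⟩ := V_seg hu
            by_cases hov : ∃ φ : ℝ, v = seg p q φ
            · -- a u v on the segment, b off : swap blocks
              obtain ⟨w, rfl⟩ := hov
              obtain ⟨-, -, -, hw0, hw1⟩ := V_seg hv
              apply G_blocks
              rw [D_same, D_same, D_same,
                D_expL (x := z) hob (by simp [wt] at hwb ⊢; omega),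
                D_expL (x := w) hob (by simp [wt] at hwb ⊢; omega),
                D_expL (x := x) hob hwb]
              have hPB := PBalg (D_nonneg p b hp hb) (D_nonneg q b hq hb)
                (le_of_lt hz0) (le_of_lt hz1) (le_of_lt hw0) (le_of_lt hw1)
                (le_of_lt hx0) (le_of_lt hx1)
              have e := mul_le_mul_of_nonneg_left hPB (D_nonneg p q hp hq)
              linarith [e]
            · -- cross pair (a,u), b v off
              push_neg at hov
              rw [D_same, D_expL (x := x) hob hwb, D_expL (x := x) hov hwv,
                D_expL (x := z) hov (by simp [wt] at hwv ⊢; omega),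
                D_symm b (seg p q z), D_expL (x := z) hob (by simp [wt] at hwb ⊢; omega)]
              have hIH1 : D p b * D q v ≤ D p q * D b v + D p v * D q b := by
                have := IH p b q v hp hb hq hv (by simp [wt] at h ⊢; omega)
                rw [D_symm b q] at this; linarith
              have hIH2 : D q b * D p v ≤ D p q * D b v + D q v * D p b := by
                have := IH q b p v hq hb hp hv (by simp [wt] at h ⊢; omega)
                rw [D_symm q p, D_symm b p] at this; linarith
              have key := PDalg (x := x) (z := z)
                (a0 := D p b) (a1 := D q b) (u0 := D p v) (u1 := D q v)
                (L := D p q * D b v) (by linarith [hIH1]) (by linarith [hIH2])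
              linarith [key]
          · push_neg at hou
            by_cases hov : ∃ φ : ℝ, v = seg p q φ
            · -- cross pair (a,v), b u off : swap u v
              obtain ⟨w, rfl⟩ := hov
              obtain ⟨-, -, -, hw0, hw1⟩ := V_seg hv
              apply G_uv
              rw [D_same, D_expL (x := x) hob hwb, D_expL (x := x) hou hwu,
                D_expL (x := w) hou (by simp [wt] at hwu ⊢; omega),
                D_symm b (seg p q w), D_expL (x := w) hob (by simp [wt] at hwb ⊢; omega)]
              have hIH1 : D p b * D q u ≤ D p q * D b u + D p u * D q b := by
                have := IH p b q u hp hb hq hu (by simp [wt] at h ⊢; omega)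
                rw [D_symm b q] at this; linarith
              have hIH2 : D q b * D p u ≤ D p q * D b u + D q u * D p b := by
                have := IH q b p u hq hb hp hu (by simp [wt] at h ⊢; omega)
                rw [D_symm q p, D_symm b p] at this; linarith
              have key := PDalg (x := x) (z := w)
                (a0 := D p b) (a1 := D q b) (u0 := D p u) (u1 := D q u)
                (L := D p q * D b u) (by linarith [hIH1]) (by linarith [hIH2])
              linarith [key]
            · -- a expandable
              push_neg at hov
              rw [D_expL (x := x) hob hwb, D_expL (x := x) hou hwu, D_expL (x := x) hov hwv]
              have IH1 : D p b * D u v ≤ D p u * D b v + D p v * D b u :=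
                IH p b u v hp hb hu hv (by simp [wt] at h ⊢; omega)
              have IH2 : D q b * D u v ≤ D q u * D b v + D q v * D b u :=
                IH q b u v hq hb hu hv (by simp [wt] at h ⊢; omega)
              have e1 := mul_le_mul_of_nonneg_left IH1 (by linarith : (0:ℝ) ≤ 1 - x)
              have e2 := mul_le_mul_of_nonneg_left IH2 (le_of_lt hx0)
              linarith [e1, e2]
      -- dominance selection
      rcases le_total (wt b) (wt a) with hab | hab
      · rcases le_total (wt v) (wt u) with huv | huv
        · rcases le_total (wt u) (wt a) with hx | hx
          · -- a dominant
            cases a with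
            | pt0 =>
                rcases wt_eq_zero (by simp [wt] at hab; omega : wt b = 0) with rfl | rfl <;>
                  rcases wt_eq_zero (by simp [wt] at hx; omega : wt u = 0) with rfl | rfl <;>
                    rcases wt_eq_zero (by simp [wt] at huv hx; omega : wt v = 0) with rfl | rfl <;>
                      simp [D] <;> norm_num
            | pt1 =>
                rcases wt_eq_zero (by simp [wt] at hab; omega : wt b = 0) with rfl | rfl <;>
                  rcases wt_eq_zero (by simp [wt] at hx; omega : wt u = 0) with rfl | rfl <;>
                    rcases wt_eq_zero (by simp [wt] at huv hx; omega : wt v = 0) with rfl | rfl <;>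
                      simp [D] <;> norm_num
            | seg p q x => exact DOM p q x b u v ha hb hu hv h hab hx (by omega)
          · -- u dominant
            cases u with
            | pt0 =>
                rcases wt_eq_zero (by simp [wt] at hx; omega : wt a = 0) with rfl | rfl <;>
                  rcases wt_eq_zero (by simp [wt] at hab hx; omega : wt b = 0) with rfl | rfl <;>
                    rcases wt_eq_zero (by simp [wt] at huv; omega : wt v = 0) with rfl | rfl <;>
                      simp [D] <;> norm_num
            | pt1 =>
                rcases wt_eq_zero (by simp [wt] at hx; omega : wt a = 0) with rfl | rfl <;>
                  rcases wt_eq_zero (by simp [wt] at hab hx; omega : wt b = 0) with rfl | rfl <;>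
                    rcases wt_eq_zero (by simp [wt] at huv; omega : wt v = 0) with rfl | rfl <;>
                      simp [D] <;> norm_num
            | seg p q x =>
                exact G_blocks (DOM p q x v a b hu hv ha hb (by omega) huv hx (by omega))
        · rcases le_total (wt v) (wt a) with hx | hx
          · -- a dominant
            cases a with
            | pt0 =>
                rcases wt_eq_zero (by simp [wt] at hab; omega : wt b = 0) with rfl | rfl <;>
                  rcases wt_eq_zero (by simp [wt] at huv hx; omega : wt u = 0) with rfl | rfl <;>
                    rcases wt_eq_zero (by simp [wt] at hx; omega : wt v = 0) with rfl | rfl <;>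
                      simp [D] <;> norm_num
            | pt1 =>
                rcases wt_eq_zero (by simp [wt] at hab; omega : wt b = 0) with rfl | rfl <;>
                  rcases wt_eq_zero (by simp [wt] at huv hx; omega : wt u = 0) with rfl | rfl <;>
                    rcases wt_eq_zero (by simp [wt] at hx; omega : wt v = 0) with rfl | rfl <;>
                      simp [D] <;> norm_num
            | seg p q x => exact DOM p q x b u v ha hb hu hv h hab (by omega) hx
          · -- v dominant
            cases v with
            | pt0 =>
                rcases wt_eq_zero (by simp [wt] at hx; omega : wt a = 0) with rfl | rfl <;>
                  rcases wt_eq_zero (by simp [wt] at hab hx; omega : wt b = 0) with rfl | rfl <;>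
                    rcases wt_eq_zero (by simp [wt] at huv; omega : wt u = 0) with rfl | rfl <;>
                      simp [D] <;> norm_num
            | pt1 =>
                rcases wt_eq_zero (by simp [wt] at hx; omega : wt a = 0) with rfl | rfl <;>
                  rcases wt_eq_zero (by simp [wt] at hab hx; omega : wt b = 0) with rfl | rfl <;>
                    rcases wt_eq_zero (by simp [wt] at huv; omega : wt u = 0) with rfl | rfl <;>
                      simp [D] <;> norm_num
            | seg p q x =>
                exact G_blocks (G_ab (DOM p q x u a b hv hu ha hb (by omega) huv hx (by omega)))
      · rcases le_total (wt v) (wt u) with huv | huv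
        · rcases le_total (wt u) (wt b) with hx | hx
          · -- b dominant
            cases b with
            | pt0 =>
                rcases wt_eq_zero (by simp [wt] at hab; omega : wt a = 0) with rfl | rfl <;>
                  rcases wt_eq_zero (by simp [wt] at hx; omega : wt u = 0) with rfl | rfl <;>
                    rcases wt_eq_zero (by simp [wt] at huv hx; omega : wt v = 0) with rfl | rfl <;>
                      simp [D] <;> norm_num
            | pt1 =>
                rcases wt_eq_zero (by simp [wt] at hab; omega : wt a = 0) with rfl | rfl <;>
                  rcases wt_eq_zero (by simp [wt] at hx; omega : wt u = 0) with rfl | rfl <;>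
                    rcases wt_eq_zero (by simp [wt] at huv hx; omega : wt v = 0) with rfl | rfl <;>
                      simp [D] <;> norm_num
            | seg p q x =>
                exact G_ab (DOM p q x a u v hb ha hu hv (by omega) hab hx (by omega))
          · -- u dominant
            cases u with
            | pt0 =>
                rcases wt_eq_zero (by simp [wt] at hab hx; omega : wt a = 0) with rfl | rfl <;>
                  rcases wt_eq_zero (by simp [wt] at hx; omega : wt b = 0) with rfl | rfl <;>
                    rcases wt_eq_zero (by simp [wt] at huv; omega : wt v = 0) with rfl | rfl <;>
                      simp [D] <;> norm_num
            | pt1 =>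
                rcases wt_eq_zero (by simp [wt] at hab hx; omega : wt a = 0) with rfl | rfl <;>
                  rcases wt_eq_zero (by simp [wt] at hx; omega : wt b = 0) with rfl | rfl <;>
                    rcases wt_eq_zero (by simp [wt] at huv; omega : wt v = 0) with rfl | rfl <;>
                      simp [D] <;> norm_num
            | seg p q x =>
                exact G_blocks (DOM p q x v a b hu hv ha hb (by omega) huv (by omega) hx)
        · rcases le_total (wt v) (wt b) with hx | hx
          · -- b dominant
            cases b with
            | pt0 =>
                rcases wt_eq_zero (by simp [wt] at hab; omega : wt a = 0) with rfl | rfl <;>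
                  rcases wt_eq_zero (by simp [wt] at huv hx; omega : wt u = 0) with rfl | rfl <;>
                    rcases wt_eq_zero (by simp [wt] at hx; omega : wt v = 0) with rfl | rfl <;>
                      simp [D] <;> norm_num
            | pt1 =>
                rcases wt_eq_zero (by simp [wt] at hab; omega : wt a = 0) with rfl | rfl <;>
                  rcases wt_eq_zero (by simp [wt] at huv hx; omega : wt u = 0) with rfl | rfl <;>
                    rcases wt_eq_zero (by simp [wt] at hx; omega : wt v = 0) with rfl | rfl <;>
                      simp [D] <;> norm_num
            | seg p q x =>
                exact G_ab (DOM p q x a u v hb ha hu hv (by omega) hab (by omega) hx)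
          · -- v dominant
            cases v with
            | pt0 =>
                rcases wt_eq_zero (by simp [wt] at hab hx; omega : wt a = 0) with rfl | rfl <;>
                  rcases wt_eq_zero (by simp [wt] at hx; omega : wt b = 0) with rfl | rfl <;>
                    rcases wt_eq_zero (by simp [wt] at huv; omega : wt u = 0) with rfl | rfl <;>
                      simp [D] <;> norm_num
            | pt1 =>
                rcases wt_eq_zero (by simp [wt] at hab hx; omega : wt a = 0) with rfl | rfl <;>
                  rcases wt_eq_zero (by simp [wt] at hx; omega : wt b = 0) with rfl | rfl <;>
                    rcases wt_eq_zero (by simp [wt] at huv; omega : wt u = 0) with rfl | rfl <;>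
                      simp [D] <;> norm_num
            | seg p q x =>
                exact G_blocks (G_ab (DOM p q x u a b hv hu ha hb (by omega) huv (by omega) hx))


lemma ne_seg_left (p q : P) (φ : ℝ) : p ≠ seg p q φ := by
  intro h
  have := congrArg wt h
  simp [wt] at this
  omega

lemma ne_seg_right (p q : P) (φ : ℝ) : q ≠ seg p q φ := by
  intro h
  have := congrArg wt h
  simp [wt] at this
  omega

lemma D_end_left (p q : P) (θ : ℝ) : D (seg p q θ) p = θ * D q p := by
  rw [D_expL (fun φ => ne_seg_left p q φ) (by simp [wt]; omega), D_self]
  ring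

lemma D_end_right (p q : P) (θ : ℝ) : D (seg p q θ) q = (1-θ) * D p q := by
  rw [D_expL (fun φ => ne_seg_right p q φ) (by simp [wt]; omega), D_self]
  ring

end P

open P

abbrev Y : Type := {w : P // V w}

noncomputable instance : MetricSpace Y where
  dist a b := D a.1 b.1
  dist_self a := D_self a.1
  dist_comm a b := D_symm a.1 b.1
  dist_triangle a c b := D_triangle a.1 c.1 b.1 a.2 c.2 b.2
  eq_of_dist_eq_zero := by
    intro a b h
    by_contra hne
    have hpos : 0 < D a.1 b.1 :=
      D_pos a.1 b.1 a.2 b.2 (fun hh => hne (Subtype.ext hh))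
    change D a.1 b.1 = 0 at h
    linarith

lemma dist_def (a b : Y) : dist a b = D a.1 b.1 := rfl

noncomputable def path (u v : Y) (hne : u.1 ≠ v.1) : ℝ → Y := fun t =>
  if h1 : t ≤ 0 then u
  else if h2 : D u.1 v.1 ≤ t then v
  else ⟨P.seg u.1 v.1 (t / D u.1 v.1),
    ⟨u.2, v.2, hne, by
      have hD : 0 < D u.1 v.1 := D_pos u.1 v.1 u.2 v.2 hne
      have ht : 0 < t := lt_of_not_ge h1
      positivity,
      by
      have hD : 0 < D u.1 v.1 := D_pos u.1 v.1 u.2 v.2 hne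
      exact (div_lt_one hD).2 (lt_of_not_ge h2)⟩⟩

lemma path_geo (u v : Y) (hne : u.1 ≠ v.1) : IsGeodesicSegment (path u v hne) u v := by
  have hD : 0 < D u.1 v.1 := D_pos u.1 v.1 u.2 v.2 hne
  have hdist : dist u v = D u.1 v.1 := rfl
  have mid_val : ∀ t : ℝ, ¬ t ≤ 0 → ¬ D u.1 v.1 ≤ t →
      (path u v hne t).1 = P.seg u.1 v.1 (t / D u.1 v.1) := by
    intro t h1 h2
    simp only [path]
    rw [dif_neg h1, dif_neg h2]
  refine ⟨by simp only [path]; rw [dif_pos le_rfl], ?_, ?_⟩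
  · simp only [path, hdist]
    rw [dif_neg (not_le.mpr hD), dif_pos le_rfl]
  · have key : ∀ s t, 0 ≤ s → s ≤ t → t ≤ D u.1 v.1 →
        dist (path u v hne s) (path u v hne t) = t - s := by
      intro s t hs hst ht
      rw [dist_def]
      by_cases h1 : s ≤ 0
      · have hs0 : s = 0 := le_antisymm h1 hs
        subst hs0
        rw [show (path u v hne 0).1 = u.1 from by
          simp only [path]; rw [dif_pos le_rfl]]
        by_cases h2 : t ≤ 0
        · have : t = 0 := le_antisymm h2 hst
          subst this
          rw [show (path u v hne 0).1 = u.1 from by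
            simp only [path]; rw [dif_pos le_rfl]]
          simp
        · by_cases h3 : D u.1 v.1 ≤ t
          · rw [show (path u v hne t).1 = v.1 from by
              simp only [path]; rw [dif_neg h2, dif_pos h3]]
            have : t = D u.1 v.1 := le_antisymm ht h3
            rw [this]; ring
          · rw [mid_val t h2 h3, D_symm, D_end_left, D_symm v.1 u.1]
            field_simp; ring
      · have hs' : 0 < s := lt_of_not_ge h1
        have ht0 : ¬ t ≤ 0 := by push_neg; linarith
        by_cases h3 : D u.1 v.1 ≤ s
        · have hsD : s = D u.1 v.1 := le_antisymm (le_trans hst ht) h3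
          have htD : t = D u.1 v.1 := le_antisymm ht (le_trans h3 hst)
          rw [show (path u v hne s).1 = v.1 from by
              simp only [path]; rw [dif_neg h1, dif_pos h3],
            show (path u v hne t).1 = v.1 from by
              simp only [path]; rw [dif_neg ht0, dif_pos (by linarith)]]
          rw [hsD, htD]; simp
        · by_cases h4 : D u.1 v.1 ≤ t
          · have htD : t = D u.1 v.1 := le_antisymm ht h4
            rw [mid_val s h1 h3,
              show (path u v hne t).1 = v.1 from by
                simp only [path]; rw [dif_neg ht0, dif_pos h4]]
            rw [D_end_right, htD]
            field_simp
          · rw [mid_val s h1 h3, mid_val t ht0 h4, D_same,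
              abs_of_nonpos (by
                have h5 : s / D u.1 v.1 ≤ t / D u.1 v.1 :=
                  (div_le_div_iff_of_pos_right hD).2 hst
                linarith)]
            field_simp; ring
    intro s hsI t htI
    rw [hdist] at hsI htI
    rcases le_total s t with hst | hst
    · rw [key s t hsI.1 hst htI.2, abs_of_nonpos (by linarith)]; ring
    · rw [dist_comm, key t s htI.1 hst hsI.2, abs_of_nonneg (by linarith)]

lemma exists_geodesic (u v : Y) : ∃ γ : ℝ → Y, IsGeodesicSegment γ u v := by
  by_cases h : u = v
  · subst h
    refine ⟨fun _ => u, rfl, by simp, ?_⟩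
    intro s hs t ht
    simp only [Set.mem_Icc, dist_self] at hs ht
    have hs0 : s = 0 := le_antisymm hs.2 hs.1
    have ht0 : t = 0 := le_antisymm ht.2 ht.1
    subst hs0; subst ht0
    simp
  · exact ⟨_, path_geo u v (fun hh => h (Subtype.ext hh))⟩


-- ### Two distinct geodesics between the endpoints

lemma pt0_ne_pt1 : P.pt0 ≠ P.pt1 := fun h => P.noConfusion h

lemma D01 : D P.pt0 P.pt1 = 1 := by simp [P.D]
lemma D10 : D P.pt1 P.pt0 = 1 := by simp [P.D]

noncomputable def A : P := P.seg P.pt0 P.pt1 (1/4)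
noncomputable def B : P := P.seg P.pt0 P.pt1 (3/4)

lemma VA : V A := ⟨trivial, trivial, pt0_ne_pt1, by norm_num, by norm_num⟩
lemma VB : V B := ⟨trivial, trivial, pt0_ne_pt1, by norm_num, by norm_num⟩

lemma A_ne_B : A ≠ B := by
  intro h
  rw [A, B, P.seg.injEq] at h
  norm_num at h

lemma Vσ {t : ℝ} (h0 : 0 < t) (h1 : t < 1) : V (P.seg P.pt0 P.pt1 t) :=
  ⟨trivial, trivial, pt0_ne_pt1, h0, h1⟩

lemma VM {φ : ℝ} (h0 : 0 < φ) (h1 : φ < 1) : V (P.seg A B φ) :=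
  ⟨VA, VB, A_ne_B, h0, h1⟩

lemma Dσσ (s t : ℝ) : D (P.seg P.pt0 P.pt1 s) (P.seg P.pt0 P.pt1 t) = |s - t| := by
  rw [P.D_same, D01, mul_one]

lemma Dσ0 (t : ℝ) : D (P.seg P.pt0 P.pt1 t) P.pt0 = t := by
  rw [P.D_end_left, D10, mul_one]

lemma Dσ1 (t : ℝ) : D (P.seg P.pt0 P.pt1 t) P.pt1 = 1 - t := by
  rw [P.D_end_right, D01, mul_one]

lemma DA0 : D A P.pt0 = 1/4 := by rw [A, Dσ0]
lemma DA1 : D A P.pt1 = 3/4 := by rw [A, Dσ1]; norm_num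
lemma DB0 : D B P.pt0 = 3/4 := by rw [B, Dσ0]
lemma DB1 : D B P.pt1 = 1/4 := by rw [B, Dσ1]; norm_num
lemma DAB : D A B = 1/2 := by
  rw [A, B, P.D_same, D01, mul_one]; norm_num

lemma DM_pt0 (φ : ℝ) : D (P.seg A B φ) P.pt0 = 1/4 + φ/2 := by
  rw [P.D_expL (fun ψ h => P.noConfusion h) (by simp [P.wt, A, B]), DA0, DB0]
  ring

lemma DM_pt1 (φ : ℝ) : D (P.seg A B φ) P.pt1 = 3/4 - φ/2 := by
  rw [P.D_expL (fun ψ h => P.noConfusion h) (by simp [P.wt, A, B]), DA1, DB1]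
  ring

lemma DM_arm (φ r : ℝ) :
    D (P.seg A B φ) (P.seg P.pt0 P.pt1 r) =
      (1-φ) * |1/4 - r| + φ * |3/4 - r| := by
  have hne : ∀ ψ : ℝ, P.seg P.pt0 P.pt1 r ≠ P.seg A B ψ := by
    intro ψ h
    rw [P.seg.injEq] at h
    have h1 := h.1
    rw [A] at h1
    exact P.noConfusion h1
  rw [P.D_expL hne (by simp [P.wt, A, B]), A, B, Dσσ, Dσσ]

lemma DM_M (φ ψ : ℝ) : D (P.seg A B φ) (P.seg A B ψ) = |φ - ψ| * (1/2) := by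
  rw [P.D_same, DAB]

def X0 : Y := ⟨P.pt0, trivial⟩
def Y0 : Y := ⟨P.pt1, trivial⟩

lemma X0_ne_Y0' : X0.1 ≠ Y0.1 := pt0_ne_pt1

lemma dist_X0Y0 : dist X0 Y0 = 1 := D01

noncomputable def gamma1 : ℝ → Y := path X0 Y0 X0_ne_Y0'

lemma gamma1_geo : IsGeodesicSegment gamma1 X0 Y0 := path_geo X0 Y0 X0_ne_Y0'

noncomputable def gamma2 : ℝ → Y := fun t =>
  if h1 : t ≤ 0 then X0
  else if h2 : 1 ≤ t then Y0
  else if h3 : t ≤ 1/4 ∨ 3/4 ≤ t then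
    ⟨P.seg P.pt0 P.pt1 t, Vσ (lt_of_not_ge h1) (lt_of_not_ge h2)⟩
  else
    ⟨P.seg A B (2*t - 1/2), VM
      (by push_neg at h3; linarith [h3.1])
      (by push_neg at h3; linarith [h3.2])⟩

lemma gamma2_geo : IsGeodesicSegment gamma2 X0 Y0 := by
  refine ⟨by simp only [gamma2]; rw [dif_pos le_rfl], ?_, ?_⟩
  · rw [dist_X0Y0]
    simp only [gamma2]
    rw [dif_neg (by norm_num), dif_pos le_rfl]
  · have key : ∀ s t, 0 ≤ s → s ≤ t → t ≤ 1 →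
        dist (gamma2 s) (gamma2 t) = t - s := by
      intro s t hs hst ht
      rw [dist_def]
      by_cases hs1 : s ≤ 0
      · have hs0 : s = 0 := le_antisymm hs1 hs
        subst hs0
        rw [show (gamma2 0).1 = P.pt0 from by simp only [gamma2]; rw [dif_pos le_rfl]; rfl]
        by_cases ht1 : t ≤ 0
        · have ht0 : t = 0 := le_antisymm ht1 hst
          subst ht0
          rw [show (gamma2 0).1 = P.pt0 from by simp only [gamma2]; rw [dif_pos le_rfl]; rfl]
          simp [P.D]
        · by_cases ht2 : 1 ≤ t
          · rw [show (gamma2 t).1 = P.pt1 from by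
              simp only [gamma2]; rw [dif_neg ht1, dif_pos ht2]; rfl]
            rw [D01]
            linarith [le_antisymm ht ht2]
          · by_cases ht3 : t ≤ 1/4 ∨ 3/4 ≤ t
            · rw [show (gamma2 t).1 = P.seg P.pt0 P.pt1 t from by
                simp only [gamma2]; rw [dif_neg ht1, dif_neg ht2, dif_pos ht3]]
              rw [P.D_symm, Dσ0]
              ring
            · rw [show (gamma2 t).1 = P.seg A B (2*t - 1/2) from by
                simp only [gamma2]; rw [dif_neg ht1, dif_neg ht2, dif_neg ht3]]
              rw [P.D_symm, DM_pt0]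
              ring
      · have hs' : 0 < s := lt_of_not_ge hs1
        have ht1 : ¬ t ≤ 0 := by push_neg; linarith
        by_cases hs2 : 1 ≤ s
        · have : s = 1 := le_antisymm (le_trans hst ht) hs2
          have htt : t = 1 := le_antisymm ht (le_trans hs2 hst)
          rw [show (gamma2 s).1 = P.pt1 from by
              simp only [gamma2]; rw [dif_neg hs1, dif_pos hs2]; rfl,
            show (gamma2 t).1 = P.pt1 from by
              simp only [gamma2]; rw [dif_neg ht1, dif_pos (by linarith)]; rfl]
          rw [this, htt]; simp [P.D]
        · by_cases ht2 : 1 ≤ t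
          · have htt : t = 1 := le_antisymm ht ht2
            rw [show (gamma2 t).1 = P.pt1 from by
              simp only [gamma2]; rw [dif_neg ht1, dif_pos ht2]; rfl]
            by_cases hs3 : s ≤ 1/4 ∨ 3/4 ≤ s
            · rw [show (gamma2 s).1 = P.seg P.pt0 P.pt1 s from by
                simp only [gamma2]; rw [dif_neg hs1, dif_neg hs2, dif_pos hs3]]
              rw [Dσ1, htt]
            · rw [show (gamma2 s).1 = P.seg A B (2*s - 1/2) from by
                simp only [gamma2]; rw [dif_neg hs1, dif_neg hs2, dif_neg hs3]]
              rw [DM_pt1, htt]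
              ring
          · -- both s,t strictly inside (0,1)
            by_cases hs3 : s ≤ 1/4 ∨ 3/4 ≤ s
            · rw [show (gamma2 s).1 = P.seg P.pt0 P.pt1 s from by
                simp only [gamma2]; rw [dif_neg hs1, dif_neg hs2, dif_pos hs3]]
              by_cases ht3 : t ≤ 1/4 ∨ 3/4 ≤ t
              · rw [show (gamma2 t).1 = P.seg P.pt0 P.pt1 t from by
                  simp only [gamma2]; rw [dif_neg ht1, dif_neg ht2, dif_pos ht3]]
                rw [Dσσ, abs_of_nonpos (by linarith)]
                ring
              · rw [show (gamma2 t).1 = P.seg A B (2*t - 1/2) from by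
                  simp only [gamma2]; rw [dif_neg ht1, dif_neg ht2, dif_neg ht3]]
                push_neg at ht3
                have hs4 : s ≤ 1/4 := by
                  rcases hs3 with h | h
                  · exact h
                  · linarith [ht3.2]
                rw [P.D_symm, DM_arm,
                  abs_of_nonneg (by linarith), abs_of_nonneg (by linarith)]
                ring
            · push_neg at hs3
              rw [show (gamma2 s).1 = P.seg A B (2*s - 1/2) from by
                simp only [gamma2]
                rw [dif_neg hs1, dif_neg hs2, dif_neg (by push_neg; exact hs3)]]
              by_cases ht3 : t ≤ 1/4 ∨ 3/4 ≤ t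
              · have ht4 : 3/4 ≤ t := by
                  rcases ht3 with h | h
                  · linarith [hs3.1]
                  · exact h
                rw [show (gamma2 t).1 = P.seg P.pt0 P.pt1 t from by
                  simp only [gamma2]; rw [dif_neg ht1, dif_neg ht2, dif_pos ht3]]
                rw [DM_arm, abs_of_nonpos (by linarith), abs_of_nonpos (by linarith)]
                ring
              · rw [show (gamma2 t).1 = P.seg A B (2*t - 1/2) from by
                  simp only [gamma2]; rw [dif_neg ht1, dif_neg ht2, dif_neg ht3]]
                rw [DM_M, abs_of_nonpos (by linarith)]
                ring
    intro s hsI t htI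
    rw [dist_X0Y0] at hsI htI
    rcases le_total s t with hst | hst
    · rw [key s t hsI.1 hst htI.2, abs_of_nonpos (by linarith)]; ring
    · rw [dist_comm, key t s htI.1 hst hsI.2, abs_of_nonneg (by linarith)]

lemma gammas_differ : gamma1 (1/2) ≠ gamma2 (1/2) := by
  have h1 : (gamma1 (1/2)).1 = P.seg P.pt0 P.pt1 ((1/2) / D P.pt0 P.pt1) := by
    simp only [gamma1, path]
    rw [dif_neg (by norm_num)]
    rw [dif_neg (show ¬ D X0.1 Y0.1 ≤ (1/2:ℝ) by rw [show D X0.1 Y0.1 = 1 from D01]; norm_num)]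
    rfl
  have h2 : (gamma2 (1/2)).1 = P.seg A B (2*(1/2 : ℝ) - 1/2) := by
    simp only [gamma2]
    rw [dif_neg (by norm_num), dif_neg (by norm_num),
      dif_neg (show ¬ ((1/2:ℝ) ≤ 1/4 ∨ 3/4 ≤ (1/2:ℝ)) by norm_num)]
  intro h
  have hd : dist (gamma1 (1/2)) (gamma2 (1/2)) = 0 := by rw [h]; simp
  rw [dist_def, h1, h2] at hd
  rw [D01] at hd
  norm_num at hd
  rw [P.D_symm, DM_arm] at hd
  norm_num at hd

end FLS

theorem exists_geodesic_ptolemy_not_uniquely_geodesic :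
    ∃ (Y : Type) (_ : MetricSpace Y),
      IsGeodesicSpace Y ∧ IsPtolemy Y ∧ ¬ UniquelyGeodesic Y := by
  refine ⟨FLS.Y, inferInstance, ?_, ?_, ?_⟩
  · exact fun u v => FLS.exists_geodesic u v
  · intro x y u v
    exact FLS.P.D_ptolemy x.1 y.1 u.1 v.1 x.2 y.2 u.2 v.2
  · intro hU
    have := hU FLS.X0 FLS.Y0 FLS.gamma1 FLS.gamma2 FLS.gamma1_geo FLS.gamma2_geo
      (1/2) (by rw [FLS.dist_X0Y0]; constructor <;> norm_num)
    exact FLS.gammas_differ this
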